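/- For every β > 0, the integral over ℝ³ minus the unit ball of s_β⁶, where s_β(r) = √((β²+1)/(β²+r²)), equals (π/2)·(−β + β⁵ + (1+β²)³·arctan(β))/β³. -/

import Mathlib

open MeasureTheory Real

section Helpers
open Filter Topology Set

lemma deriv_aux (β : ℝ) (hβ : 0 < β) (r : ℝ) :
    HasDerivAt (fun r : ℝ => -r / (4 * (β ^ 2 + r ^ 2) ^ 2) + r / (8 * β ^ 2 * (β ^ 2 + r ^ 2))
      + arctan (r / β) / (8 * β ^ 3)) (r ^ 2 / (β ^ 2 + r ^ 2) ^ 3) r := by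
  have hd : (0:ℝ) < β ^ 2 + r ^ 2 := by positivity
  have h1 : HasDerivAt (fun r : ℝ => -r / (4 * (β ^ 2 + r ^ 2) ^ 2))
      (((-1) * (4 * (β ^ 2 + r ^ 2) ^ 2) - (-r) * (4 * (2 * (β ^ 2 + r ^ 2) * (2 * r))))
        / (4 * (β ^ 2 + r ^ 2) ^ 2) ^ 2) r := by
    have hden : HasDerivAt (fun r : ℝ => 4 * (β ^ 2 + r ^ 2) ^ 2)
        (4 * (2 * (β ^ 2 + r ^ 2) * (2 * r))) r := by
      have : HasDerivAt (fun r : ℝ => β ^ 2 + r ^ 2) (2 * r) r := by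
        simpa using ((hasDerivAt_pow 2 r).const_add (β ^ 2))
      exact ((this.pow 2).const_mul 4).congr_deriv (by ring)
    exact ((hasDerivAt_id r).neg.div hden (by positivity)).congr_deriv (by rfl)
  have h2 : HasDerivAt (fun r : ℝ => r / (8 * β ^ 2 * (β ^ 2 + r ^ 2)))
      ((1 * (8 * β ^ 2 * (β ^ 2 + r ^ 2)) - r * (8 * β ^ 2 * (2 * r)))
        / (8 * β ^ 2 * (β ^ 2 + r ^ 2)) ^ 2) r := by
    have hden : HasDerivAt (fun r : ℝ => 8 * β ^ 2 * (β ^ 2 + r ^ 2)) (8 * β ^ 2 * (2 * r)) r := by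
      have : HasDerivAt (fun r : ℝ => β ^ 2 + r ^ 2) (2 * r) r := by
        simpa using ((hasDerivAt_pow 2 r).const_add (β ^ 2))
      exact (this.const_mul _)
    exact ((hasDerivAt_id r).div hden (by positivity)).congr_deriv (by simp only [id_eq])
  have h3 : HasDerivAt (fun r : ℝ => arctan (r / β) / (8 * β ^ 3))
      ((1 / (1 + (r / β) ^ 2) * (1 / β)) / (8 * β ^ 3)) r := by
    have : HasDerivAt (fun r : ℝ => arctan (r / β)) (1 / (1 + (r / β) ^ 2) * (1 / β)) r := by
      have hdiv : HasDerivAt (fun r : ℝ => r / β) (1 / β) r := by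
        simpa using (hasDerivAt_id r).div_const β
      exact (Real.hasDerivAt_arctan (r / β)).comp r hdiv
    exact this.div_const _
  have := (h1.add h2).add h3
  refine this.congr_deriv ?_
  have h1β : (1 : ℝ) + (r / β) ^ 2 ≠ 0 := by positivity
  have hβ0 : β ≠ 0 := hβ.ne'
  have hd0 : β ^ 2 + r ^ 2 ≠ 0 := hd.ne'
  field_simp
  ring

lemma tendsto_aux (β : ℝ) (hβ : 0 < β) :
    Tendsto (fun r : ℝ => -r / (4 * (β ^ 2 + r ^ 2) ^ 2) + r / (8 * β ^ 2 * (β ^ 2 + r ^ 2))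
      + arctan (r / β) / (8 * β ^ 3)) atTop (𝓝 (π / (16 * β ^ 3))) := by
  have hg : Tendsto (fun r : ℝ => r / (β ^ 2 + r ^ 2)) atTop (𝓝 0) := by
    have h : Tendsto (fun r : ℝ => r⁻¹ / (β ^ 2 * (r⁻¹) ^ 2 + 1)) atTop (𝓝 (0 / (β ^ 2 * 0 ^ 2 + 1))) := by
      apply Tendsto.div tendsto_inv_atTop_zero
      · exact (((tendsto_inv_atTop_zero.pow 2).const_mul _).add_const 1)
      · norm_num
    rw [show (0:ℝ) / (β ^ 2 * 0 ^ 2 + 1) = 0 by norm_num] at h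
    apply h.congr'
    filter_upwards [eventually_gt_atTop 0] with r hr
    have : β ^ 2 + r ^ 2 > 0 := by positivity
    field_simp
  have hinv : Tendsto (fun r : ℝ => r⁻¹) atTop (𝓝 (0:ℝ)) := tendsto_inv_atTop_zero
  have harc : Tendsto (fun r : ℝ => arctan (r / β) / (8 * β ^ 3)) atTop (𝓝 ((π / 2) / (8 * β ^ 3))) := by
    apply Tendsto.div_const
    apply tendsto_nhds_of_tendsto_nhdsWithin
    exact tendsto_arctan_atTop.comp (tendsto_id.atTop_div_const hβ)
  have h1 : Tendsto (fun r : ℝ => -(1/4) * (r⁻¹ * (r / (β ^ 2 + r ^ 2)) ^ 2)) atTop (𝓝 0) := by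
    have := ((hinv.mul (hg.pow 2)).const_mul (-(1/4 : ℝ)))
    simpa using this
  have h2 : Tendsto (fun r : ℝ => (1 / (8 * β ^ 2)) * (r / (β ^ 2 + r ^ 2))) atTop (𝓝 0) := by
    have := hg.const_mul (1 / (8 * β ^ 2))
    rwa [mul_zero] at this
  have := (h1.add h2).add harc
  rw [show (0:ℝ) + 0 + (π / 2) / (8 * β ^ 3) = π / (16 * β ^ 3) by ring] at this
  apply this.congr'
  filter_upwards [eventually_gt_atTop 0] with r hr
  have hd : (0:ℝ) < β ^ 2 + r ^ 2 := by positivity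
  field_simp

lemma oneD (β : ℝ) (hβ : 0 < β) :
    ∫ r in Set.Ioi (1:ℝ), r ^ 2 / (β ^ 2 + r ^ 2) ^ 3 =
      π / (16 * β ^ 3) - (-1 / (4 * (β ^ 2 + 1) ^ 2) + 1 / (8 * β ^ 2 * (β ^ 2 + 1))
        + arctan (1 / β) / (8 * β ^ 3)) := by
  have := integral_Ioi_of_hasDerivAt_of_nonneg' (a := (1:ℝ))
    (g := fun r : ℝ => -r / (4 * (β ^ 2 + r ^ 2) ^ 2) + r / (8 * β ^ 2 * (β ^ 2 + r ^ 2))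
      + arctan (r / β) / (8 * β ^ 3))
    (g' := fun r : ℝ => r ^ 2 / (β ^ 2 + r ^ 2) ^ 3)
    (fun x _ => deriv_aux β hβ x)
    (fun x _ => by positivity)
    (tendsto_aux β hβ)
  simpa using this

theorem stmt1_aux (β : ℝ) (hβ : 0 < β) :
    (∫ x in {x : EuclideanSpace ℝ (Fin 3) | 1 ≤ ‖x‖},
      (Real.sqrt ((β ^ 2 + 1) / (β ^ 2 + ‖x‖ ^ 2))) ^ 6) =
      (π / 2) * ((-β + β ^ 5 + (1 + β ^ 2) ^ 3 * Real.arctan β) / β ^ 3) := by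
  have hS : MeasurableSet {x : EuclideanSpace ℝ (Fin 3) | 1 ≤ ‖x‖} :=
    (isClosed_le continuous_const continuous_norm).measurableSet
  set f : ℝ → ℝ :=
    fun r => Set.indicator (Set.Ici (1:ℝ)) (fun r => ((β ^ 2 + 1) / (β ^ 2 + r ^ 2)) ^ 3) r with hf
  have h1 : (∫ x in {x : EuclideanSpace ℝ (Fin 3) | 1 ≤ ‖x‖},
      (Real.sqrt ((β ^ 2 + 1) / (β ^ 2 + ‖x‖ ^ 2))) ^ 6) = ∫ x : EuclideanSpace ℝ (Fin 3), f ‖x‖ := by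
    rw [← integral_indicator hS]
    congr 1; funext x
    have hq : (0:ℝ) ≤ (β ^ 2 + 1) / (β ^ 2 + ‖x‖ ^ 2) := by positivity
    by_cases hx : 1 ≤ ‖x‖
    · simp only [hf, Set.indicator_apply, Set.mem_setOf_eq, Set.mem_Ici, hx, if_true]
      rw [show (6:ℕ) = 2 * 3 from rfl, pow_mul, Real.sq_sqrt hq]
    · simp only [hf, Set.indicator_apply, Set.mem_setOf_eq, Set.mem_Ici, hx, if_false]
  rw [h1, integral_fun_norm_addHaar volume f]
  have hdim : Module.finrank ℝ (EuclideanSpace ℝ (Fin 3)) = 3 := finrank_euclideanSpace_fin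
  rw [hdim]
  have hvol : (volume (Metric.ball (0 : EuclideanSpace ℝ (Fin 3)) 1)).toReal = π * (4 / 3) := by
    rw [EuclideanSpace.volume_ball]
    have hG : Real.Gamma ((Fintype.card (Fin 3) : ℝ) / 2 + 1) = 3 / 4 * Real.sqrt π := by
      rw [Fintype.card_fin]
      rw [show ((3:ℕ) : ℝ) / 2 + 1 = 3 / 2 + 1 by norm_num, Real.Gamma_add_one (by norm_num),
        show (3/2:ℝ) = 1 / 2 + 1 by norm_num, Real.Gamma_add_one (by norm_num),
        Real.Gamma_one_half_eq]
      ring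
    rw [hG, Fintype.card_fin]
    have hsp : (0:ℝ) < Real.sqrt π := Real.sqrt_pos.mpr pi_pos
    rw [show Real.sqrt π ^ 3 / (3 / 4 * Real.sqrt π) = π * (4 / 3) by
      rw [show Real.sqrt π ^ 3 = π * Real.sqrt π by
        rw [show (3:ℕ) = 2 + 1 from rfl, pow_succ, Real.sq_sqrt pi_pos.le]]
      field_simp]
    simp [ENNReal.toReal_ofReal (by positivity : (0:ℝ) ≤ π * (4/3))]
  rw [measureReal_def, hvol]
  have h2 : (∫ y in Set.Ioi (0:ℝ), y ^ (3 - 1) • f y) =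
      (β ^ 2 + 1) ^ 3 * ∫ r in Set.Ioi (1:ℝ), r ^ 2 / (β ^ 2 + r ^ 2) ^ 3 := by
    have e1 : ∀ y : ℝ, y ^ (3 - 1) • f y =
        Set.indicator (Set.Ici (1:ℝ)) (fun y => (β ^ 2 + 1) ^ 3 * (y ^ 2 / (β ^ 2 + y ^ 2) ^ 3)) y := by
      intro y
      by_cases hy : (1:ℝ) ≤ y
      · simp only [hf, Set.indicator_apply, Set.mem_Ici, hy, if_true, smul_eq_mul]
        have : (0:ℝ) < β ^ 2 + y ^ 2 := by positivity
        field_simp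
      · simp only [hf, Set.indicator_apply, Set.mem_Ici, hy, if_false, smul_eq_mul, mul_zero]
    simp_rw [e1]
    rw [setIntegral_indicator measurableSet_Ici,
      show Set.Ioi (0:ℝ) ∩ Set.Ici 1 = Set.Ici 1 by
        rw [Set.inter_eq_self_of_subset_right]
        exact fun x hx => Set.mem_Ioi.mpr (lt_of_lt_of_le one_pos hx),
      integral_Ici_eq_integral_Ioi, integral_const_mul]
  rw [h2, oneD β hβ]
  have harc : arctan (1 / β) = π / 2 - arctan β := by
    rw [one_div, arctan_inv_of_pos hβ]
  rw [harc]
  simp only [nsmul_eq_mul, smul_eq_mul]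
  have hβ3 : β ^ 3 ≠ 0 := by positivity
  have hb1 : (β ^ 2 + 1) ≠ 0 := by positivity
  field_simp
  ring

end Helpers

/-- For every β > 0, the integral over ℝ³ minus the unit ball of `s_β⁶`,
where `s_β(x) = √((β²+1)/(β²+|x|²))`, equals
`(π/2)·(−β + β⁵ + (1+β²)³·arctan β)/β³`. -/
theorem stmt1 (β : ℝ) (hβ : 0 < β) :
    (∫ x in {x : EuclideanSpace ℝ (Fin 3) | 1 ≤ ‖x‖},
      (Real.sqrt ((β ^ 2 + 1) / (β ^ 2 + ‖x‖ ^ 2))) ^ 6) =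
      (π / 2) * ((-β + β ^ 5 + (1 + β ^ 2) ^ 3 * Real.arctan β) / β ^ 3) := by
  open Filter Topology Set in
  exact stmt1_aux β hβ
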